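/- arXiv:1809.00080 — 2 statements merged into one kernel-verified Lean document; each statement's English description precedes it below -/
import Mathlib

section
/- For fixed λ > 0, a ≥ 0, b ≥ 0, the function μ ↦ λ²(1 + (a + b/μ²)μ²)/(2μ(μ−λ)) + λ/μ is convex on (λ, ∞). -/
private lemma wt_deriv1 (lam a b x : ℝ) (hlam : 0 < lam) (hxl : lam < x) :
    HasDerivAt (fun μ : ℝ =>
      lam ^ 2 * (1 + (a + b / μ ^ 2) * μ ^ 2) / (2 * μ * (μ - lam)) + lam / μ)
      (lam ^ 2 / 2 * (-(a * lam * x ^ 2) - (1 + b) * (2 * x - lam)) / (x ^ 2 - lam * x) ^ 2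
        - lam / x ^ 2) x := by
  have hx0 : (0:ℝ) < x := hlam.trans hxl
  have hx0' : x ≠ 0 := ne_of_gt hx0
  have hxl0 : x - lam ≠ 0 := sub_ne_zero.mpr (ne_of_gt hxl)
  have hsq : x ^ 2 ≠ 0 := pow_ne_zero _ hx0'
  have hden : 2 * x * (x - lam) ≠ 0 :=
    ne_of_gt (mul_pos (mul_pos two_pos hx0) (sub_pos.mpr hxl))
  have A : HasDerivAt (fun μ : ℝ => μ ^ 2) (2 * x) x := by
    simpa using hasDerivAt_pow 2 x
  have B : HasDerivAt (fun μ : ℝ => b / μ ^ 2)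
      ((0 * x ^ 2 - b * (2 * x)) / (x ^ 2) ^ 2) x :=
    (hasDerivAt_const x b).div A hsq
  have N : HasDerivAt (fun μ : ℝ => lam ^ 2 * (1 + (a + b / μ ^ 2) * μ ^ 2))
      (lam ^ 2 * (((0 + (0 * x ^ 2 - b * (2 * x)) / (x ^ 2) ^ 2) * x ^ 2)
        + (a + b / x ^ 2) * (2 * x))) x :=
    ((((hasDerivAt_const x a).add B).mul A).const_add 1).const_mul (lam ^ 2)
  have D : HasDerivAt (fun μ : ℝ => 2 * μ * (μ - lam)) (2 * 1 * (x - lam) + 2 * x * 1) x := by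
    simpa using ((hasDerivAt_id x).const_mul 2).fun_mul ((hasDerivAt_id x).sub_const lam)
  have R : HasDerivAt (fun μ : ℝ => lam / μ)
      ((0 * x - lam * 1) / x ^ 2) x := (hasDerivAt_const x lam).div (hasDerivAt_id x) hx0'
  have := (N.fun_div D hden).fun_add R
  convert this using 1
  · rfl
  · rfl
  have hqne : x ^ 2 - lam * x ≠ 0 := by
    have : x ^ 2 - lam * x = x * (x - lam) := by ring
    rw [this]; exact mul_ne_zero hx0' hxl0
  field_simp [hx0', hxl0, hqne]
  ring

private lemma wt_deriv2 (lam a b x : ℝ) (hlam : 0 < lam) (hxl : lam < x) :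
    HasDerivAt (fun μ : ℝ =>
      lam ^ 2 / 2 * (-(a * lam * μ ^ 2) - (1 + b) * (2 * μ - lam)) / (μ ^ 2 - lam * μ) ^ 2
        - lam / μ ^ 2)
      (lam ^ 2 * (a * lam * x ^ 3 + (1 + b) * (3 * x ^ 2 - 3 * lam * x + lam ^ 2))
        / (x ^ 2 - lam * x) ^ 3 + 2 * lam / x ^ 3) x := by
  have hx0 : (0:ℝ) < x := hlam.trans hxl
  have hx0' : x ≠ 0 := ne_of_gt hx0
  have hxl0 : x - lam ≠ 0 := sub_ne_zero.mpr (ne_of_gt hxl)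
  have hsq : x ^ 2 ≠ 0 := pow_ne_zero _ hx0'
  have hqne : x ^ 2 - lam * x ≠ 0 := by
    have : x ^ 2 - lam * x = x * (x - lam) := by ring
    rw [this]; exact mul_ne_zero hx0' hxl0
  have hq2 : (x ^ 2 - lam * x) ^ 2 ≠ 0 := pow_ne_zero _ hqne
  have h2 : HasDerivAt (fun μ : ℝ => μ ^ 2) (2 * x) x := by simpa using hasDerivAt_pow 2 x
  have hlin : HasDerivAt (fun μ : ℝ => 2 * μ - lam) (2 * 1 - 0) x := by
    simpa using (((hasDerivAt_id x).const_mul 2)).fun_sub (hasDerivAt_const x lam)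
  have P : HasDerivAt (fun μ : ℝ => lam ^ 2 / 2 * (-(a * lam * μ ^ 2) - (1 + b) * (2 * μ - lam)))
      (lam ^ 2 / 2 * (-(a * lam * (2 * x)) - (1 + b) * 2)) x := by
    simpa using (((h2.const_mul (a * lam)).neg).sub (hlin.const_mul (1 + b))).const_mul (lam ^ 2 / 2)
  have hbase : HasDerivAt (fun μ : ℝ => μ ^ 2 - lam * μ) (2 * x - lam * 1) x := by
    simpa using h2.fun_sub ((hasDerivAt_id x).const_mul lam)
  have Dq : HasDerivAt (fun μ : ℝ => (μ ^ 2 - lam * μ) ^ 2)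
      (2 * (x ^ 2 - lam * x) ^ 1 * (2 * x - lam * 1)) x := by
    simpa using hbase.fun_pow 2
  have R : HasDerivAt (fun μ : ℝ => lam / μ ^ 2)
      ((0 * x ^ 2 - lam * (2 * x)) / (x ^ 2) ^ 2) x :=
    (hasDerivAt_const x lam).div h2 hsq
  have := (P.fun_div Dq hq2).fun_sub R
  convert this using 1
  · rfl
  · rfl
  field_simp [hx0', hxl0, hqne]
  ring

theorem total_waiting_convex_in_mu (lam a b : ℝ) (hlam : 0 < lam) (ha : 0 ≤ a) (hb : 0 ≤ b) :
    ConvexOn ℝ (Set.Ioi lam)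
      (fun μ : ℝ => lam ^ 2 * (1 + (a + b / μ ^ 2) * μ ^ 2) / (2 * μ * (μ - lam)) + lam / μ) := by
  have hint : interior (Set.Ioi lam) = Set.Ioi lam := interior_Ioi
  apply convexOn_of_hasDerivWithinAt2_nonneg
    (f' := fun x => lam ^ 2 / 2 * (-(a * lam * x ^ 2) - (1 + b) * (2 * x - lam))
      / (x ^ 2 - lam * x) ^ 2 - lam / x ^ 2)
    (f'' := fun x => lam ^ 2 * (a * lam * x ^ 3 + (1 + b) * (3 * x ^ 2 - 3 * lam * x + lam ^ 2))
      / (x ^ 2 - lam * x) ^ 3 + 2 * lam / x ^ 3)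
    (convex_Ioi lam)
  · intro x hx
    exact (wt_deriv1 lam a b x hlam hx).continuousAt.continuousWithinAt
  · intro x hx
    rw [hint] at hx ⊢
    exact (wt_deriv1 lam a b x hlam hx).hasDerivWithinAt
  · intro x hx
    rw [hint] at hx ⊢
    exact (wt_deriv2 lam a b x hlam hx).hasDerivWithinAt
  · intro x hx
    rw [hint] at hx
    have hxl : lam < x := hx
    have hx0 : (0:ℝ) < x := hlam.trans hxl
    have hq : (0:ℝ) < x ^ 2 - lam * x := by nlinarith
    have h3 : (0:ℝ) < 3 * x ^ 2 - 3 * lam * x + lam ^ 2 := by nlinarith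
    have hnum : (0:ℝ) ≤ lam ^ 2 * (a * lam * x ^ 3
        + (1 + b) * (3 * x ^ 2 - 3 * lam * x + lam ^ 2)) := by
      have h1 : (0:ℝ) ≤ a * lam * x ^ 3 := by positivity
      have h2 : (0:ℝ) ≤ (1 + b) * (3 * x ^ 2 - 3 * lam * x + lam ^ 2) :=
        mul_nonneg (by linarith) h3.le
      nlinarith
    have ht1 : (0:ℝ) ≤ lam ^ 2 * (a * lam * x ^ 3
        + (1 + b) * (3 * x ^ 2 - 3 * lam * x + lam ^ 2)) / (x ^ 2 - lam * x) ^ 3 :=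
      div_nonneg hnum (by positivity)
    have ht2 : (0:ℝ) ≤ 2 * lam / x ^ 3 := by positivity
    linarith
end

section
/- Let a ≥ 0 and 0 ≤ b ≤ 1. The function WT_I(λ,μ) = λ(1 + (a + b/μ²)μ²)/(2μ(μ−λ)) + 1/μ is jointly convex on the set {(λ,μ) : 0 ≤ λ < μ}. -/
private lemma combo_lt {u v w z α β : ℝ} (huv : u < v) (hwz : w < z)
    (hα : 0 ≤ α) (hβ : 0 ≤ β) (hαβ : α + β = 1) : α * u + β * w < α * v + β * z := by
  rcases eq_or_lt_of_le hα with h | h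
  · have hβ1 : β = 1 := by linarith
    simp [← h, hβ1, hwz]
  · have h1 : α * u < α * v := by exact mul_lt_mul_of_pos_left huv h
    have h2 : β * w ≤ β * z := by exact mul_le_mul_of_nonneg_left hwz.le hβ
    linarith

private lemma combo_pos {u v α β : ℝ} (hu : 0 < u) (hv : 0 < v)
    (hα : 0 ≤ α) (hβ : 0 ≤ β) (hαβ : α + β = 1) : 0 < α * u + β * v := by
  have := combo_lt hu hv hα hβ hαβ
  simpa using this

private lemma hS_convex : Convex ℝ {p : ℝ × ℝ | 0 ≤ p.1 ∧ p.1 < p.2} := by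
  rintro ⟨x1, x2⟩ ⟨hx1, hx2⟩ ⟨y1, y2⟩ ⟨hy1, hy2⟩ α β hα hβ hαβ
  simp only [Prod.smul_mk, Prod.mk_add_mk, smul_eq_mul, Set.mem_setOf_eq]
  exact ⟨add_nonneg (mul_nonneg hα hx1) (mul_nonneg hβ hy1), combo_lt hx2 hy2 hα hβ hαβ⟩

private lemma key_inv {dx dy α β : ℝ} (hdx : 0 < dx) (hdy : 0 < dy)
    (hα : 0 ≤ α) (hβ : 0 ≤ β) (hαβ : α + β = 1) :
    (α * dx + β * dy)⁻¹ ≤ α * dx⁻¹ + β * dy⁻¹ := by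
  have hz : 0 < α * dx + β * dy := combo_pos hdx hdy hα hβ hαβ
  have hrw : α * dx⁻¹ + β * dy⁻¹ = (α * dy + β * dx) / (dx * dy) := by
    field_simp
  have hβ' : β = 1 - α := by linarith
  subst hβ'
  rw [hrw, inv_eq_one_div, div_le_div_iff₀ hz (by positivity)]
  nlinarith [mul_nonneg (mul_nonneg hα hβ) (sq_nonneg (dx - dy))]

private lemma key_quad {x y s t α β : ℝ} (hs : 0 < s) (ht : 0 < t)
    (hα : 0 ≤ α) (hβ : 0 ≤ β) (hαβ : α + β = 1) :
    (α * x + β * y) ^ 2 / (α * s + β * t) ≤ α * (x ^ 2 / s) + β * (y ^ 2 / t) := by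
  have hz : 0 < α * s + β * t := combo_pos hs ht hα hβ hαβ
  have hrw : α * (x ^ 2 / s) + β * (y ^ 2 / t) = (α * x ^ 2 * t + β * y ^ 2 * s) / (s * t) := by
    field_simp
  have hβ' : β = 1 - α := by linarith
  subst hβ'
  rw [hrw, div_le_div_iff₀ hz (by positivity)]
  nlinarith [mul_nonneg (mul_nonneg hα hβ) (sq_nonneg (x * t - y * s))]

private lemma convexOn_congr {s : Set (ℝ × ℝ)} {f g : ℝ × ℝ → ℝ}
    (hf : ConvexOn ℝ s f) (h : ∀ p ∈ s, f p = g p) : ConvexOn ℝ s g := by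
  refine ⟨hf.1, fun x hx y hy α β hα hβ hαβ => ?_⟩
  rw [← h _ hx, ← h _ hy, ← h _ (hf.1 hx hy hα hβ hαβ)]
  exact hf.2 hx hy hα hβ hαβ

theorem individual_waiting_jointly_convex (a b : ℝ) (ha : 0 ≤ a) (hb0 : 0 ≤ b) (hb1 : b ≤ 1) :
    ConvexOn ℝ {p : ℝ × ℝ | 0 ≤ p.1 ∧ p.1 < p.2}
      (fun p : ℝ × ℝ =>
        p.1 * (1 + (a + b / p.2 ^ 2) * p.2 ^ 2) / (2 * p.2 * (p.2 - p.1)) + 1 / p.2) := by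
  set S := {p : ℝ × ℝ | 0 ≤ p.1 ∧ p.1 < p.2} with hSdef
  -- convex building blocks
  have h1 : ConvexOn ℝ S (fun p : ℝ × ℝ => (p.2 - p.1)⁻¹) := by
    refine ⟨hS_convex, ?_⟩
    rintro ⟨x1, x2⟩ ⟨hx1, hx2⟩ ⟨y1, y2⟩ ⟨hy1, hy2⟩ α β hα hβ hαβ
    have hdx : 0 < x2 - x1 := by linarith
    have hdy : 0 < y2 - y1 := by linarith
    have := key_inv hdx hdy hα hβ hαβ
    simp only [Prod.smul_mk, Prod.mk_add_mk, smul_eq_mul]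
    convert this using 2
    · rfl
    · ring
  have h2 : ConvexOn ℝ S (fun p : ℝ × ℝ => (p.2)⁻¹) := by
    refine ⟨hS_convex, ?_⟩
    rintro ⟨x1, x2⟩ ⟨hx1, hx2⟩ ⟨y1, y2⟩ ⟨hy1, hy2⟩ α β hα hβ hαβ
    have hx : 0 < x2 := by linarith
    have hy : 0 < y2 := by linarith
    have := key_inv hx hy hα hβ hαβ
    simpa using this
  have h3 : ConvexOn ℝ S (fun p : ℝ × ℝ => p.2 ^ 2 / (p.2 - p.1)) := by
    refine ⟨hS_convex, ?_⟩
    rintro ⟨x1, x2⟩ ⟨hx1, hx2⟩ ⟨y1, y2⟩ ⟨hy1, hy2⟩ α β hα hβ hαβ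
    have hdx : 0 < x2 - x1 := by linarith
    have hdy : 0 < y2 - y1 := by linarith
    have := key_quad (x := x2) (y := y2) hdx hdy hα hβ hαβ
    simp only [Prod.smul_mk, Prod.mk_add_mk, smul_eq_mul]
    convert this using 2
    · rfl
    · ring
  have h4 : ConcaveOn ℝ S (fun p : ℝ × ℝ => p.2) := by
    refine ⟨hS_convex, ?_⟩
    rintro ⟨x1, x2⟩ _ ⟨y1, y2⟩ _ α β hα hβ hαβ
    simp
  -- combination
  have hc1 : (0:ℝ) ≤ (1 + b) / 2 := by linarith
  have hc2 : (0:ℝ) ≤ (1 - b) / 2 := by linarith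
  have hc3 : (0:ℝ) ≤ a / 2 := by linarith
  have hg : ConvexOn ℝ S
      ((fun p : ℝ × ℝ => (1 + b) / 2 * (p.2 - p.1)⁻¹) +
        ((fun p : ℝ × ℝ => (1 - b) / 2 * (p.2)⁻¹) +
          (fun p : ℝ × ℝ => a / 2 * (p.2 ^ 2 / (p.2 - p.1)))) -
        fun p : ℝ × ℝ => a / 2 * p.2) := by
    have e1 := ConvexOn.smul hc1 h1
    have e2 := ConvexOn.smul hc2 h2
    have e3 := ConvexOn.smul hc3 h3
    have e4 := ConcaveOn.smul hc3 h4
    simp only [smul_eq_mul] at e1 e2 e3 e4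
    exact (e1.add (e2.add e3)).sub e4
  refine convexOn_congr hg ?_
  rintro ⟨p1, p2⟩ ⟨hp1, hp2⟩
  have hp : 0 < p2 := lt_of_le_of_lt hp1 hp2
  have hd : 0 < p2 - p1 := by linarith
  simp only [Pi.sub_apply, Pi.add_apply]
  field_simp
  ring
end
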